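/- There is an absolute constant C > 0 such that the following holds. Let G be a finite connected symmetric directed multigraph in which every vertex carries at least one loop (an arc e with pred e = succ e), let φ be a circulation on G, and let δ be a generalized intersection distance measure for φ. For an orbit E_i of φ, let diam(E_i) denote the maximum, over arcs e₁, e₂ ∈ E_i, of the distance in the underlying undirected graph of G between pred e₁ and pred e₂. Then for every arc e lying on orbit E_i and every j ∈ ℤ: δ j e e ≤ C·(diam(E_i) + 1). -/

import Mathlib

/-- There is an absolute constant `C > 0` such that, for any
circulation `φ` on a finite connected symmetric directed multigraph in which
every vertex carries a loop, and any generalized intersection distance measure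
`δ` for `φ`: for every arc `e` on orbit `E_i` and every `j ∈ ℤ`,
`δ j e e ≤ C·(diam(E_i) + 1)`, where `diam(E_i)` is the maximal undirected-graph
distance between start vertices of arcs of `E_i`.  (Formulated below via any
upper bound `D` on those distances; in particular `D = diam(E_i)` works.) -/
theorem stmt_14 : ∃ C : ℝ, 0 < C ∧
    ∀ (V E : Type) [Fintype V] [Fintype E] [Nonempty V]
      (pred succ : E → V) (rev : E → E),
      (∀ e, rev (rev e) = e) →
      (∀ e, pred (rev e) = succ e) →
      (∀ e, succ (rev e) = pred e) →
      (∀ e, pred e = succ e → rev e = e) →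
      -- connectedness of the underlying undirected graph
      (∀ u v : V, Relation.ReflTransGen
        (fun a b => ∃ e, (pred e = a ∧ succ e = b) ∨ (pred e = b ∧ succ e = a)) u v) →
      -- every vertex carries at least one loop
      (∀ v : V, ∃ e : E, pred e = v ∧ succ e = v) →
      ∀ (φ : Equiv.Perm E), (∀ e, succ e = pred (φ e)) →
      -- δ is a generalized intersection distance measure
      ∀ δ : ℤ → E → E → ℕ,
      (∀ e, δ 0 e e = 0) →
      (∀ e, δ 1 e (φ e) = 0) →
      (∀ e₁ e₂, pred e₁ = pred e₂ → δ 0 e₁ e₂ ≤ 1) →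
      (∀ (x : ℤ) (e₁ e₂ : E), δ (-x) e₂ e₁ = δ x e₁ e₂) →
      (∀ (x y : ℤ) (e₁ e₂ e₃ : E), δ (x + y) e₁ e₃ ≤ δ x e₁ e₂ + δ y e₂ e₃) →
      ∀ (e : E) (D : ℕ),
        -- D bounds the diameter of the orbit of e in the underlying undirected graph
        (∀ e₁ e₂ : E, (∃ z : ℤ, (φ ^ z) e = e₁) → (∃ z : ℤ, (φ ^ z) e = e₂) →
          (SimpleGraph.fromRel fun u v : V => ∃ a : E, pred a = u ∧ succ a = v).dist
            (pred e₁) (pred e₂) ≤ D) →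
        ∀ j : ℤ, (δ j e e : ℝ) ≤ C * (D + 1) := by
  refine ⟨6, by norm_num, ?_⟩
  intro V E _ _ _ pred succ rev hrr hpr hsr hfix hconn hloop φ hφ δ h0 h1 hsame hsym htri e D hD j
  set G : SimpleGraph V := SimpleGraph.fromRel fun u v : V => ∃ a : E, pred a = u ∧ succ a = v
    with hG
  -- shift lemma
  have shift : ∀ (x : ℤ) (e₁ e₂ : E), δ (x + 1) e₁ (φ e₂) = δ x e₁ e₂ := by
    intro x e₁ e₂
    apply le_antisymm
    · have := htri x 1 e₁ e₂ (φ e₂)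
      rwa [h1, Nat.add_zero] at this
    · have h2 := htri (x + 1) (-1) e₁ (φ e₂) e₂
      have h3 : δ (-1) (φ e₂) e₂ = 0 := by
        have := hsym 1 e₂ (φ e₂); rw [this, h1]
      rw [h3, Nat.add_zero] at h2
      calc δ x e₁ e₂ = δ (x + 1 + -1) e₁ e₂ := by ring_nf
        _ ≤ δ (x + 1) e₁ (φ e₂) := h2
  -- translate along the orbit
  have orbit : ∀ (n : ℤ) (a : E), δ n e ((φ ^ n) a) = δ 0 e a := by
    intro n
    induction n using Int.induction_on with
    | zero => intro a; simp
    | succ k ih =>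
        intro a
        have h1' : (φ ^ ((k : ℤ) + 1)) a = φ ((φ ^ (k : ℤ)) a) := by
          rw [← Equiv.Perm.mul_apply, ← zpow_one_add, add_comm]
        rw [h1', shift (k : ℤ) e ((φ ^ (k : ℤ)) a), ih]
    | pred k ih =>
        intro a
        have h1' : (φ ^ (-(k : ℤ))) a = φ ((φ ^ (-(k : ℤ) - 1)) a) := by
          rw [← Equiv.Perm.mul_apply, ← zpow_one_add]
          norm_num
        have hs := shift (-(k : ℤ) - 1) e ((φ ^ (-(k : ℤ) - 1)) a)
        rw [sub_add_cancel, ← h1'] at hs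
        rw [← hs, ih]
  -- one-step bound
  have step : ∀ (a x y : E), pred x = pred a → pred y = succ a → δ 1 x y ≤ 2 := by
    intro a x y hx hy
    have t1 : δ 1 x y = δ (0 + 1) x y := by norm_num
    have t2 := htri 0 1 x a y
    have t3 : δ 1 a y = δ (1 + 0) a y := by norm_num
    have t4 := htri 1 0 a (φ a) y
    have t5 : δ 0 (φ a) y ≤ 1 := by
      apply hsame; rw [← hφ a, hy]
    have t6 : δ 1 a y ≤ 1 := by
      rw [t3]; calc δ (1 + 0) a y ≤ δ 1 a (φ a) + δ 0 (φ a) y := t4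
        _ ≤ 0 + 1 := by rw [h1]; exact Nat.add_le_add_left t5 0
        _ = 1 := by norm_num
    have t7 : δ 0 x a ≤ 1 := hsame x a hx
    rw [t1]
    calc δ (0 + 1) x y ≤ δ 0 x a + δ 1 a y := t2
      _ ≤ 1 + 1 := Nat.add_le_add t7 t6
      _ = 2 := rfl
  -- same-vertex step via loops
  have stepv : ∀ (u v : V), (G.Adj u v ∨ u = v) → ∀ x y : E, pred x = u → pred y = v →
      δ 1 x y ≤ 2 := by
    intro u v huv x y hx hy
    rcases huv with hadj | rfl
    · rw [hG] at hadj
      rcases hadj with ⟨hne, ⟨a, ha1, ha2⟩ | ⟨a, ha1, ha2⟩⟩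
      · exact step a x y (by rw [hx, ha1]) (by rw [hy, ha2])
      · exact step (rev a) x y (by rw [hx, hpr, ha2]) (by rw [hy, hsr, ha1])
    · obtain ⟨a, ha1, ha2⟩ := hloop u
      exact step a x y (by rw [hx, ha1]) (by rw [hy, ha2])
  -- along a walk
  have walklem : ∀ (u v : V) (p : G.Walk u v) (x y : E), pred x = u → pred y = v →
      δ (p.length : ℤ) x y ≤ 2 * p.length + 1 := by
    intro u v p
    induction p with
    | nil => intro x y hx hy
             simp only [SimpleGraph.Walk.length_nil, Nat.cast_zero]
             calc δ 0 x y ≤ 1 := hsame x y (by rw [hx, hy])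
               _ ≤ 2 * 0 + 1 := by norm_num
    | @cons a b c hab p ih =>
        intro x y hx hy
        obtain ⟨ℓ, hl1, hl2⟩ := hloop b
        have hcast : ((p.cons hab).length : ℤ) = 1 + (p.length : ℤ) := by
          simp [SimpleGraph.Walk.length_cons]; ring
        have t1 := htri 1 (p.length : ℤ) x ℓ y
        have t2 : δ 1 x ℓ ≤ 2 := stepv a b (Or.inl hab) x ℓ hx hl1
        have t3 : δ (p.length : ℤ) ℓ y ≤ 2 * p.length + 1 := ih ℓ y hl1 hy
        rw [hcast]
        calc δ (1 + (p.length : ℤ)) x y ≤ δ 1 x ℓ + δ (p.length : ℤ) ℓ y := t1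
          _ ≤ 2 + (2 * p.length + 1) := Nat.add_le_add t2 t3
          _ = 2 * (p.cons hab).length + 1 := by
              simp [SimpleGraph.Walk.length_cons]; ring
  -- waiting at a fixed vertex
  have samelem : ∀ (n : ℕ) (x y : E), pred x = pred y → δ (n : ℤ) x y ≤ 2 * n + 1 := by
    intro n
    induction n with
    | zero => intro x y hxy
              simpa using hsame x y hxy
    | succ k ih =>
        intro x y hxy
        obtain ⟨ℓ, hl1, hl2⟩ := hloop (pred x)
        have hcast : ((k + 1 : ℕ) : ℤ) = 1 + (k : ℤ) := by push_cast; ring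
        have t1 := htri 1 (k : ℤ) x ℓ y
        have t2 : δ 1 x ℓ ≤ 2 := stepv (pred x) (pred x) (Or.inr rfl) x ℓ rfl hl1
        have t3 : δ (k : ℤ) ℓ y ≤ 2 * k + 1 := ih ℓ y (by rw [hl1, hxy])
        rw [hcast]
        calc δ (1 + (k : ℤ)) x y ≤ δ 1 x ℓ + δ (k : ℤ) ℓ y := t1
          _ ≤ 2 + (2 * k + 1) := Nat.add_le_add t2 t3
          _ = 2 * (k + 1) + 1 := by ring
  -- put it together
  set a : E := (φ ^ (-j)) e with ha
  have hja : (φ ^ j) a = e := by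
    rw [ha, ← Equiv.Perm.mul_apply, ← zpow_add]
    simp
  have hor : δ j e e = δ 0 e a := by
    have := orbit j a
    rwa [hja] at this
  -- reachability
  have hreach : ∀ u v : V, G.Reachable u v := by
    intro u v
    have h := hconn u v
    induction h with
    | refl => exact SimpleGraph.Reachable.refl _
    | @tail b c hub hbc ih =>
        refine ih.trans ?_
        by_cases hbc' : b = c
        · rw [hbc']
        · refine SimpleGraph.Adj.reachable ?_
          rw [hG]
          rcases hbc with ⟨w, ⟨hw1, hw2⟩ | ⟨hw1, hw2⟩⟩
          · exact ⟨hbc', Or.inl ⟨w, hw1, hw2⟩⟩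
          · exact ⟨hbc', Or.inr ⟨w, hw1, hw2⟩⟩
  obtain ⟨p, hp⟩ := (hreach (pred e) (pred a)).exists_walk_length_eq_dist
  have hdist : G.dist (pred e) (pred a) ≤ D :=
    hD e a ⟨0, by simp⟩ ⟨-j, rfl⟩
  have hlen : p.length ≤ D := by rw [hp]; exact hdist
  have t1 := htri (p.length : ℤ) (-(p.length : ℤ)) e a a
  have t2 : δ (-(p.length : ℤ)) a a = δ (p.length : ℤ) a a := hsym (p.length : ℤ) a a
  have t3 : δ (p.length : ℤ) e a ≤ 2 * p.length + 1 := walklem _ _ p e a rfl rfl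
  have t4 : δ (p.length : ℤ) a a ≤ 2 * p.length + 1 := samelem p.length a a rfl
  have key : δ j e e ≤ 4 * p.length + 2 := by
    rw [hor]
    calc δ 0 e a = δ ((p.length : ℤ) + -(p.length : ℤ)) e a := by ring_nf
      _ ≤ δ (p.length : ℤ) e a + δ (-(p.length : ℤ)) a a := t1
      _ = δ (p.length : ℤ) e a + δ (p.length : ℤ) a a := by rw [t2]
      _ ≤ (2 * p.length + 1) + (2 * p.length + 1) := Nat.add_le_add t3 t4
      _ = 4 * p.length + 2 := by ring
  have : (δ j e e : ℝ) ≤ 4 * D + 2 := by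
    have : δ j e e ≤ 4 * D + 2 := key.trans (by omega)
    exact_mod_cast this
  nlinarith [this]
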